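/- The entropy rate of the neutral Moran process with μ = 1/2 (uniform mutations), namely H(P) = Σᵢ 2^{-N} C(N,i) · H((N-i)/(2N), 1/2, i/(2N)), converges to (3/2)·log 2 as N → ∞. -/

import Mathlib

open Finset

/-- Entropy rate H(P_N) = Σᵢ 2^{-N} C(N,i) H((N-i)/(2N), 1/2, i/(2N)) of the neutral
Moran process with uniform mutation rate μ = 1/2. -/
noncomputable def moranHalfEntropyRate (N : ℕ) : ℝ :=
  ∑ i ∈ range (N + 1), ((N.choose i : ℝ) / 2 ^ N) *
    (-( (((N : ℝ) - i) / (2 * N)) * Real.log (((N : ℝ) - i) / (2 * N))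
        + (1 / 2) * Real.log (1 / 2)
        + ((i : ℝ) / (2 * N)) * Real.log ((i : ℝ) / (2 * N)) ))

open Real

noncomputable def moranD (x : ℝ) : ℝ := x * Real.log (2*x) + (1-x) * Real.log (2*(1-x))

lemma moranD_nonneg {x : ℝ} (h0 : 0 ≤ x) (h1 : x ≤ 1) : 0 ≤ moranD x := by
  have h1' : x - 1/2 ≤ x * Real.log (2*x) := by
    rcases eq_or_lt_of_le h0 with h | h
    · rw [← h]; norm_num
    · have hne : x ≠ 0 := ne_of_gt h
      have hl := Real.one_sub_inv_le_log_of_pos (x := 2*x) (by linarith)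
      have h2 := mul_le_mul_of_nonneg_left hl (le_of_lt h)
      have he : x * (1 - (2*x)⁻¹) = x - 1/2 := by
        field_simp
      linarith [he ▸ h2]
  have h2' : (1-x) - 1/2 ≤ (1-x) * Real.log (2*(1-x)) := by
    rcases eq_or_lt_of_le h1 with h | h
    · rw [h]; norm_num
    · have hne : (1:ℝ) - x ≠ 0 := by linarith
      have hl := Real.one_sub_inv_le_log_of_pos (x := 2*(1-x)) (by linarith)
      have h2 := mul_le_mul_of_nonneg_left hl (by linarith : (0:ℝ) ≤ 1 - x)
      have he : (1-x) * (1 - (2*(1-x))⁻¹) = (1-x) - 1/2 := by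
        field_simp
      linarith [he ▸ h2]
  unfold moranD; linarith

lemma moranD_le {x : ℝ} (h0 : 0 ≤ x) (h1 : x ≤ 1) : moranD x ≤ (2*x - 1)^2 := by
  have h1' : x * Real.log (2*x) ≤ x * (2*x - 1) := by
    rcases eq_or_lt_of_le h0 with h | h
    · rw [← h]; norm_num
    · have := Real.log_le_sub_one_of_pos (x := 2*x) (by linarith)
      nlinarith
  have h2' : (1-x) * Real.log (2*(1-x)) ≤ (1-x) * (2*(1-x) - 1) := by
    rcases eq_or_lt_of_le h1 with h | h
    · rw [h]; norm_num
    · have := Real.log_le_sub_one_of_pos (x := 2*(1-x)) (by linarith)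
      nlinarith
  unfold moranD; nlinarith

lemma moran_identity {x : ℝ} (h0 : 0 ≤ x) (h1 : x ≤ 1) :
    -( ((1-x)/2) * Real.log ((1-x)/2) + (1/2) * Real.log (1/2) + (x/2) * Real.log (x/2) )
      = (3/2) * Real.log 2 - moranD x / 2 := by
  have hlhalf : Real.log (1/2 : ℝ) = -Real.log 2 := by
    rw [one_div, Real.log_inv]
  rcases eq_or_lt_of_le h0 with h | hx0
  · rw [← h]
    simp [moranD, hlhalf]
    ring
  rcases eq_or_lt_of_le h1 with h | hx1
  · rw [h]
    simp [moranD, hlhalf]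
    ring
  · have e1 : Real.log ((1-x)/2) = Real.log (1-x) - Real.log 2 := by
      rw [Real.log_div (by linarith) (by norm_num)]
    have e2 : Real.log (x/2) = Real.log x - Real.log 2 := by
      rw [Real.log_div (by linarith) (by norm_num)]
    have e3 : Real.log (2*x) = Real.log 2 + Real.log x := by
      rw [Real.log_mul (by norm_num) (by linarith)]
    have e4 : Real.log (2*(1-x)) = Real.log 2 + Real.log (1-x) := by
      rw [Real.log_mul (by norm_num) (by linarith)]
    unfold moranD
    rw [e1, e2, e3, e4, hlhalf]
    ring

lemma var_sum (N : ℕ) :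
    ∑ i ∈ range (N+1), (N.choose i : ℝ) * (2*(i:ℝ) - N)^2 = (N:ℝ) * 2^N := by
  induction N with
  | zero => norm_num
  | succ N ih =>
    have hsc : (∑ i ∈ range (N+1), (N.choose i : ℝ)) = 2^N := by
      rw [← Nat.cast_sum]
      norm_cast
      exact Nat.sum_range_choose N
    have hg : ∑ i ∈ range (N+1), (N.choose (i+1) : ℝ) * (2*((i:ℝ)+1) - ((N:ℝ)+1))^2
        = (∑ i ∈ range (N+1), (N.choose i : ℝ) * (2*(i:ℝ) - ((N:ℝ)+1))^2) - ((N:ℝ)+1)^2 := by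
      have h1 := Finset.sum_range_succ' (fun i => (N.choose i : ℝ) * (2*(i:ℝ) - ((N:ℝ)+1))^2) (N+1)
      have h2 := Finset.sum_range_succ (fun i => (N.choose i : ℝ) * (2*(i:ℝ) - ((N:ℝ)+1))^2) (N+1)
      have h3 : (N.choose (N+1) : ℝ) = 0 := by
        norm_cast
        exact Nat.choose_eq_zero_of_lt (Nat.lt_succ_self N)
      simp only [h3, zero_mul, add_zero, Nat.choose_zero_right, Nat.cast_one, Nat.cast_zero] at h1 h2
      push_cast at h1 h2 ⊢
      linarith
    have key : ∑ i ∈ range (N+1+1), ((N+1).choose i : ℝ) * (2*(i:ℝ) - ((N:ℝ)+1))^2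
        = ((N:ℝ)+1) * 2^(N+1) := by
      rw [Finset.sum_range_succ' (fun i => ((N+1).choose i : ℝ) * (2*(i:ℝ) - ((N:ℝ)+1))^2) (N+1)]
      have hsplit : ∑ i ∈ range (N+1), ((N+1).choose (i+1) : ℝ) * (2*((i:ℝ)+1) - ((N:ℝ)+1))^2
          = (∑ i ∈ range (N+1), (N.choose i : ℝ) * (2*((i:ℝ)+1) - ((N:ℝ)+1))^2)
            + ∑ i ∈ range (N+1), (N.choose (i+1) : ℝ) * (2*((i:ℝ)+1) - ((N:ℝ)+1))^2 := by
        rw [← Finset.sum_add_distrib]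
        apply Finset.sum_congr rfl
        intro i _
        rw [Nat.choose_succ_succ]
        push_cast
        ring
      have hcomb : (∑ i ∈ range (N+1), (N.choose i : ℝ) * (2*((i:ℝ)+1) - ((N:ℝ)+1))^2)
            + ∑ i ∈ range (N+1), (N.choose i : ℝ) * (2*(i:ℝ) - ((N:ℝ)+1))^2
          = 2 * (∑ i ∈ range (N+1), (N.choose i : ℝ) * (2*(i:ℝ) - (N:ℝ))^2)
            + 2 * ∑ i ∈ range (N+1), (N.choose i : ℝ) := by
        rw [mul_sum, mul_sum, ← Finset.sum_add_distrib, ← Finset.sum_add_distrib]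
        apply Finset.sum_congr rfl
        intro i _
        ring
      have hbeta : ∑ i ∈ range (N+1),
            (fun i => ((N+1).choose i : ℝ) * (2*(i:ℝ) - ((N:ℝ)+1))^2) (i+1)
          = ∑ i ∈ range (N+1), ((N+1).choose (i+1) : ℝ) * (2*((i:ℝ)+1) - ((N:ℝ)+1))^2 := by
        apply Finset.sum_congr rfl
        intro i _
        push_cast
        ring
      rw [hbeta, hsplit, hg]
      simp only [Nat.choose_zero_right, Nat.cast_one, Nat.cast_zero]
      have hpow : ((N:ℝ)+1)*2^(N+1) = 2*((N:ℝ)*2^N) + 2*(2^N : ℝ) := by ring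
      have hc : (2*(0:ℝ) - ((N:ℝ)+1))^2 = ((N:ℝ)+1)^2 := by ring
      linarith [hcomb, ih, hsc, hpow, hc]
    push_cast
    exact key

noncomputable def moranE (N : ℕ) : ℝ :=
  ∑ i ∈ range (N + 1), ((N.choose i : ℝ) / 2 ^ N) * (moranD ((i:ℝ)/N) / 2)

lemma weight_sum (N : ℕ) : ∑ i ∈ range (N+1), (N.choose i : ℝ) / 2^N = 1 := by
  rw [← Finset.sum_div]
  rw [← Nat.cast_sum]
  norm_cast
  rw [Nat.sum_range_choose]
  simp

lemma rate_eq {N : ℕ} (hN : 1 ≤ N) :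
    moranHalfEntropyRate N = (3/2) * Real.log 2 - moranE N := by
  have hN0 : (N:ℝ) ≠ 0 := by positivity
  have step : moranHalfEntropyRate N
      = ∑ i ∈ range (N+1), ((N.choose i : ℝ) / 2^N) * ((3/2) * Real.log 2 - moranD ((i:ℝ)/N) / 2) := by
    unfold moranHalfEntropyRate
    apply Finset.sum_congr rfl
    intro i hi
    have hi' : i ≤ N := Nat.lt_succ_iff.mp (mem_range.mp hi)
    have hx0 : (0:ℝ) ≤ (i:ℝ)/N := by positivity
    have hx1 : (i:ℝ)/N ≤ 1 := by
      rw [div_le_one (by positivity)]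
      exact_mod_cast hi'
    have e1 : ((N : ℝ) - i) / (2 * N) = (1 - (i:ℝ)/N)/2 := by
      field_simp
      all_goals first | ring1 | (left; (first | trivial | ring1))
    have e2 : (i : ℝ) / (2 * N) = ((i:ℝ)/N)/2 := by
      field_simp
      all_goals first | ring1 | (left; (first | trivial | ring1))
    rw [e1, e2, moran_identity hx0 hx1]
  rw [step]
  unfold moranE
  have expand : ∑ i ∈ range (N+1), ((N.choose i : ℝ)/2^N) * ((3/2)*Real.log 2 - moranD ((i:ℝ)/N)/2)
      = (∑ i ∈ range (N+1), (N.choose i : ℝ)/2^N) * ((3/2)*Real.log 2)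
        - ∑ i ∈ range (N+1), ((N.choose i : ℝ)/2^N) * (moranD ((i:ℝ)/N)/2) := by
    rw [Finset.sum_mul, ← Finset.sum_sub_distrib]
    exact Finset.sum_congr rfl fun i _ => by ring
  rw [expand, weight_sum, one_mul]

lemma moranE_nonneg (N : ℕ) : 0 ≤ moranE N := by
  unfold moranE
  apply Finset.sum_nonneg
  intro i hi
  have hi' : i ≤ N := Nat.lt_succ_iff.mp (mem_range.mp hi)
  rcases Nat.eq_zero_or_pos N with h | h
  · subst h
    interval_cases i
    simp [moranD]
    positivity
  · have hx0 : (0:ℝ) ≤ (i:ℝ)/N := by positivity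
    have hx1 : (i:ℝ)/N ≤ 1 := by
      rw [div_le_one (by positivity)]
      exact_mod_cast hi'
    have := moranD_nonneg hx0 hx1
    positivity

lemma moranE_le {N : ℕ} (hN : 1 ≤ N) : moranE N ≤ 1/(2*N) := by
  have hN0 : (0:ℝ) < N := by exact_mod_cast hN
  have hbd : moranE N ≤ ∑ i ∈ range (N+1),
      ((N.choose i : ℝ)/2^N) * ((2*((i:ℝ)/N) - 1)^2 / 2) := by
    unfold moranE
    apply Finset.sum_le_sum
    intro i hi
    have hi' : i ≤ N := Nat.lt_succ_iff.mp (mem_range.mp hi)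
    have hx0 : (0:ℝ) ≤ (i:ℝ)/N := by positivity
    have hx1 : (i:ℝ)/N ≤ 1 := by
      rw [div_le_one hN0]
      exact_mod_cast hi'
    have hD := moranD_le hx0 hx1
    have hw : (0:ℝ) ≤ (N.choose i : ℝ)/2^N := by positivity
    apply mul_le_mul_of_nonneg_left _ hw
    linarith
  have hre : ∑ i ∈ range (N+1), ((N.choose i : ℝ)/2^N) * ((2*((i:ℝ)/N) - 1)^2 / 2)
      = (∑ i ∈ range (N+1), (N.choose i : ℝ) * (2*(i:ℝ) - (N:ℝ))^2) / ((2:ℝ)^N * (N:ℝ)^2 * 2) := by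
    rw [Finset.sum_div]
    apply Finset.sum_congr rfl
    intro i _
    have : 2*((i:ℝ)/N) - 1 = (2*(i:ℝ) - (N:ℝ))/(N:ℝ) := by
      field_simp
    rw [this, div_pow]
    ring
  rw [hre, var_sum] at hbd
  have : (N:ℝ) * 2^N / (2^N * (N:ℝ)^2 * 2) = 1/(2*N) := by
    field_simp
  rw [this] at hbd
  exact hbd

theorem moranHalf_entropyRate_tendsto :
    Filter.Tendsto moranHalfEntropyRate Filter.atTop
      (nhds ((3 / 2) * Real.log 2)) := by
  have hE : Filter.Tendsto moranE Filter.atTop (nhds 0) := by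
    have hup : Filter.Tendsto (fun N : ℕ => 1/(2*(N:ℝ))) Filter.atTop (nhds 0) := by
      have h0 : Filter.Tendsto (fun n : ℕ => 1 / (n:ℝ)) Filter.atTop (nhds 0) := tendsto_one_div_atTop_nhds_zero_nat
      have h1 := h0.const_mul (1/2 : ℝ)
      rw [mul_zero] at h1
      apply h1.congr
      intro n
      ring
    apply squeeze_zero' (Filter.Eventually.of_forall moranE_nonneg) _ hup
    filter_upwards [Filter.eventually_ge_atTop 1] with N hN
    exact moranE_le hN
  have : Filter.Tendsto (fun N => (3/2) * Real.log 2 - moranE N) Filter.atTop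
      (nhds ((3/2) * Real.log 2)) := by
    simpa using (tendsto_const_nhds.sub hE)
  apply this.congr'
  filter_upwards [Filter.eventually_ge_atTop 1] with N hN
  exact (rate_eq hN).symm
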